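/- Let λ > 0, Γ > 0, ρ* ∈ (0,1), J ≥ 1, with μ_min ≥ λ/ρ* (so that λ^{-1} − μ_min^{-1} ≥ (1−ρ*)/λ > 0), and suppose λΓ ≥ e^(2e). Define φ(x) = √(x·ln(ln x)) for x ≥ e^e and φ(x) = 1 otherwise. Then max over real x ≥ 1 of [ x·(μ_min^{-1} − λ^{-1}) + 2JΓ·φ(x) + J/λ ] is at most (7J²Γ²λ/(1−ρ*))·ln(ln(JλΓ/(1−ρ*))) + J/λ. -/

import Mathlib

open Real

noncomputable def phi (x : ℝ) : ℝ :=
  if Real.exp (Real.exp 1) ≤ x then Real.sqrt (x * Real.log (Real.log x)) else 1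

lemma key (a b : ℝ) (ha : 0 < a) (hb : 0 < b)
    (hr : Real.exp (2 * Real.exp 1) ≤ b / a) :
    ∀ x : ℝ, 1 ≤ x →
      -(a * x) + 2 * b * phi x ≤ 7 * (b ^ 2 / a) * Real.log (Real.log (b / a)) := by
  set r := b / a with hrdef
  clear_value r
  have hr0 : 0 < r := lt_of_lt_of_le (Real.exp_pos _) hr
  have he2 : (2:ℝ) ≤ Real.exp 1 := by
    have := Real.add_one_le_exp 1; linarith
  have hr16 : (16:ℝ) ≤ r := by
    calc (16:ℝ) = 2^4 := by norm_num
    _ ≤ (Real.exp 1)^4 := by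
        apply pow_le_pow_left₀ (by norm_num) he2
    _ = Real.exp 4 := by
        rw [← Real.exp_nat_mul]; norm_num
    _ ≤ Real.exp (2 * Real.exp 1) := by apply Real.exp_le_exp.mpr; linarith
    _ ≤ r := hr
  have hlogr : 2 * Real.exp 1 ≤ Real.log r := by
    have := Real.log_le_log (Real.exp_pos _) hr
    rwa [Real.log_exp] at this
  have hlogr0 : 0 < Real.log r := by nlinarith [Real.exp_pos 1]
  have hLLr : 1 ≤ Real.log (Real.log r) := by
    have h1 : Real.log (2 * Real.exp 1) ≤ Real.log (Real.log r) :=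
      Real.log_le_log (by positivity) hlogr
    have h2 : Real.log (2 * Real.exp 1) = Real.log 2 + 1 := by
      rw [Real.log_mul (by norm_num) (Real.exp_ne_zero 1), Real.log_exp]
    have h3 : (0:ℝ) ≤ Real.log 2 := Real.log_nonneg (by norm_num)
    linarith
  have hRHS0 : 0 ≤ 7 * (b ^ 2 / a) * Real.log (Real.log r) := by positivity
  have hb_eq : b = r * a := by rw [hrdef, div_mul_cancel₀ b ha.ne']
  have hab : a ≤ b := by nlinarith [hr16, ha]
  intro x hx
  have hx0 : (0:ℝ) < x := by linarith
  unfold phi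
  split_ifs with h
  · -- x ≥ e^e
    have hlogx : Real.exp 1 ≤ Real.log x := by
      have := Real.log_le_log (Real.exp_pos _) h
      rwa [Real.log_exp] at this
    have hlogx0 : 0 < Real.log x := lt_of_lt_of_le (Real.exp_pos 1) hlogx
    have hLx : 1 ≤ Real.log (Real.log x) := by
      have := Real.log_le_log (Real.exp_pos 1) hlogx
      rwa [Real.log_exp] at this
    set L := Real.log (Real.log x) with hLdef
    clear_value L
    have hL0 : 0 < L := by linarith
    by_cases hcase : x ≤ r ^ 7
    · -- AM-GM case
      have hsx := Real.sq_sqrt hx0.le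
      have hsL := Real.sq_sqrt hL0.le
      have hsplit : Real.sqrt (x * L) = Real.sqrt x * Real.sqrt L :=
        Real.sqrt_mul hx0.le L
      have e1 : (a * Real.sqrt x - b * Real.sqrt L) ^ 2
          = a ^ 2 * x - 2 * a * b * (Real.sqrt x * Real.sqrt L) + b ^ 2 * L := by
        linear_combination a ^ 2 * hsx + b ^ 2 * hsL
      have e2 : 2 * a * b * (Real.sqrt x * Real.sqrt L) ≤ a ^ 2 * x + b ^ 2 * L := by
        nlinarith [sq_nonneg (a * Real.sqrt x - b * Real.sqrt L)]
      have hamgm : 2 * b * Real.sqrt (x * L) ≤ a * x + b ^ 2 / a * L := by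
        rw [hsplit, ← mul_le_mul_iff_left₀ ha]
        have e3 : (a * x + b ^ 2 / a * L) * a = a ^ 2 * x + b ^ 2 * L := by
          field_simp
        rw [e3]; linarith
      -- monotonicity of log log up to r^7
      have h1 : Real.log x ≤ 7 * Real.log r := by
        have := Real.log_le_log hx0 hcase
        rwa [Real.log_pow, Nat.cast_ofNat] at this
      have h2 : L ≤ Real.log (7 * Real.log r) := by
        rw [hLdef]; exact Real.log_le_log hlogx0 (by linarith)
      have h3 : Real.log (7 * Real.log r) = Real.log 7 + Real.log (Real.log r) :=
        Real.log_mul (by norm_num) (ne_of_gt hlogr0)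
      have h4 : Real.log 7 ≤ 6 := by
        have := Real.log_le_sub_one_of_pos (show (0:ℝ) < 7 by norm_num); linarith
      have h5 : L ≤ 7 * Real.log (Real.log r) := by linarith
      have h6 : b ^ 2 / a * L ≤ 7 * (b ^ 2 / a) * Real.log (Real.log r) := by
        have hba : 0 < b ^ 2 / a := by positivity
        nlinarith
      linarith
    · -- large x : LHS ≤ 0
      push_neg at hcase
      have hrx : r ^ 7 ≤ x := hcase.le
      set q := x / r ^ 7 with hqdef
      clear_value q
      have hr7 : (0:ℝ) < r ^ 7 := by positivity
      have hqx : x = q * r ^ 7 := by rw [hqdef]; field_simp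
      have hq1 : 1 ≤ q := by
        rw [hqdef, le_div_iff₀ hr7]; linarith
      have hq0 : 0 < q := by linarith
      have hlx : L ≤ Real.log x := by
        have := Real.log_le_sub_one_of_pos hlogx0; linarith
      have hlogsplit : Real.log x = 7 * Real.log r + Real.log q := by
        rw [hqx, Real.log_mul (ne_of_gt hq0) (ne_of_gt hr7), Real.log_pow]
        push_cast; ring
      have hlr : Real.log r ≤ r := by
        have := Real.log_le_sub_one_of_pos hr0; linarith
      have hlq : Real.log q ≤ q := by
        have := Real.log_le_sub_one_of_pos hq0; linarith
      have hL_le : L ≤ 7 * r + q := by rw [hlogsplit] at hlx; linarith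
      have hr4 : (32:ℝ) ≤ r ^ 4 := by
        calc (32:ℝ) ≤ 16 ^ 4 := by norm_num
        _ ≤ r ^ 4 := pow_le_pow_left₀ (by norm_num) hr16 4
      have hkey : 4 * r ^ 2 * L ≤ x := by
        have e1 : 4 * r ^ 2 * L ≤ 4 * r ^ 2 * (7 * r + q) :=
          mul_le_mul_of_nonneg_left hL_le (by positivity)
        have e1' : 4 * r ^ 2 * (7 * r + q) = 28 * r ^ 3 + 4 * r ^ 2 * q := by ring
        have e2 : 28 * r ^ 3 + 4 * r ^ 2 * q ≤ 32 * r ^ 3 * q := by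
          have p1 : (0:ℝ) ≤ r ^ 3 * (q - 1) :=
            mul_nonneg (pow_pos hr0 3).le (by linarith)
          have p2 : (0:ℝ) ≤ r ^ 2 * q * (r - 1) :=
            mul_nonneg (mul_nonneg (pow_pos hr0 2).le hq0.le) (by linarith)
          linarith [p1, p2]
        have e3 : 32 * r ^ 3 * q ≤ r ^ 7 * q := by
          have p3 : (0:ℝ) ≤ (r ^ 4 - 32) * r ^ 3 * q :=
            mul_nonneg (mul_nonneg (sub_nonneg.mpr hr4) (pow_pos hr0 3).le) hq0.le
          linarith [p3]

        linarith [hqx]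
      have hsqrt : Real.sqrt (x * L) ≤ a * x / (2 * b) := by
        rw [show a * x / (2 * b) = Real.sqrt ((a * x / (2 * b)) ^ 2) from
          (Real.sqrt_sq (by positivity)).symm]
        apply Real.sqrt_le_sqrt
        rw [div_pow, le_div_iff₀ (by positivity)]
        have hh := mul_le_mul_of_nonneg_right hkey hx0.le
        rw [hb_eq]
        linarith [mul_le_mul_of_nonneg_left hh (sq_nonneg a)]
      have h1 : 2 * b * Real.sqrt (x * L) ≤ 2 * b * (a * x / (2 * b)) := by
        apply mul_le_mul_of_nonneg_left hsqrt (by positivity)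
      have h2 : 2 * b * (a * x / (2 * b)) = a * x := by field_simp
      linarith
  · -- x < e^e : phi = 1
    have hba : b ≤ b ^ 2 / a := by
      rw [le_div_iff₀ ha]
      nlinarith [hab, hb, ha]
    have h7 : 7 * (b ^ 2 / a) * 1 ≤ 7 * (b ^ 2 / a) * Real.log (Real.log r) :=
      mul_le_mul_of_nonneg_left hLLr (by positivity)
    have hax : 0 < a * x := mul_pos ha hx0
    linarith

/-- optimization step for the tandem sojourn-time bound: for all x ≥ 1,
x (μ_min⁻¹ - λ⁻¹) + 2 J Γ φ(x) + J/λ ≤ (7 J² Γ² λ/(1-ρ*)) ln ln (J λ Γ/(1-ρ*)) + J/λ. -/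
theorem stmt10 (lam Γ ρ μmin : ℝ) (J : ℕ) (hJ : 1 ≤ J)
    (hlam : 0 < lam) (hΓ : 0 < Γ) (hρ0 : 0 < ρ) (hρ1 : ρ < 1)
    (hμ : lam / ρ ≤ μmin)
    (hlamΓ : Real.exp (2 * Real.exp 1) ≤ lam * Γ) :
    ∀ x : ℝ, 1 ≤ x →
      x * (μmin⁻¹ - lam⁻¹) + 2 * J * Γ * phi x + J / lam ≤
        7 * J ^ 2 * Γ ^ 2 * lam / (1 - ρ) * Real.log (Real.log (J * lam * Γ / (1 - ρ)))
          + J / lam := by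
  intro x hx
  have h1ρ : (0:ℝ) < 1 - ρ := by linarith
  have hJ1 : (1:ℝ) ≤ (J:ℝ) := by exact_mod_cast hJ
  have ha : 0 < (1 - ρ) / lam := div_pos h1ρ hlam
  have hb : 0 < (J:ℝ) * Γ := by nlinarith
  have hr : Real.exp (2 * Real.exp 1) ≤ ((J:ℝ) * Γ) / ((1 - ρ) / lam) := by
    refine le_trans hlamΓ ((le_div_iff₀ ha).mpr ?_)
    have e : lam * Γ * ((1 - ρ) / lam) = Γ * (1 - ρ) := by field_simp
    rw [e]
    nlinarith
  have hk := key _ _ ha hb hr x hx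
  have eq1 : ((J:ℝ) * Γ) / ((1 - ρ) / lam) = (J:ℝ) * lam * Γ / (1 - ρ) := by
    field_simp
  have eq2 : 7 * (((J:ℝ) * Γ) ^ 2 / ((1 - ρ) / lam))
      = 7 * (J:ℝ) ^ 2 * Γ ^ 2 * lam / (1 - ρ) := by
    field_simp
  rw [eq1, eq2] at hk
  have hμ0 : 0 < μmin := lt_of_lt_of_le (div_pos hlam hρ0) hμ
  have hi : μmin⁻¹ ≤ (lam / ρ)⁻¹ := inv_anti₀ (div_pos hlam hρ0) hμ
  rw [inv_div] at hi
  have e3 : ρ / lam - lam⁻¹ = -((1 - ρ) / lam) := by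
    rw [inv_eq_one_div]; field_simp; ring
  have hsub : μmin⁻¹ - lam⁻¹ ≤ -((1 - ρ) / lam) := by linarith
  have stepA : x * (μmin⁻¹ - lam⁻¹) ≤ x * -((1 - ρ) / lam) :=
    mul_le_mul_of_nonneg_left hsub (by linarith)
  have e4 : x * -((1 - ρ) / lam) = -((1 - ρ) / lam * x) := by ring
  linarith [hk, stepA]
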